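/- For a finite group G, an element g is a dominant vertex of the conjugacy supercommuting graph of G (i.e., every element of G has a conjugate commuting with g) if and only if g lies in the center Z(G). -/

import Mathlib

theorem stmt_14 (G : Type*) [Group G] [Finite G] (g : G) :
    (∀ h : G, ∃ a : G, Commute g (a⁻¹ * h * a)) ↔ g ∈ Subgroup.center G := by
  classical
  have _inst := Fintype.ofFinite G
  constructor
  · intro hyp
    set H := Subgroup.centralizer {g} with hH
    have hHtop : H = ⊤ := by
      by_contra hne
      -- The quotient is nontrivial
      obtain ⟨x, hx⟩ : ∃ x : G, x ∉ H := by
        by_contra hall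
        push_neg at hall
        exact hne (Subgroup.eq_top_iff' H |>.mpr hall)
      have hq : (x : G ⧸ H) ≠ ((1 : G) : G ⧸ H) := by
        intro h
        exact hx (by simpa using (QuotientGroup.eq.mp h.symm))
      -- Each element has a fixed point on G ⧸ H
      have hfix : ∀ h : G, 1 ≤ Fintype.card (MulAction.fixedBy (G ⧸ H) h) := by
        intro h
        obtain ⟨a, ha⟩ := hyp h
        have hmem : a⁻¹ * h * a ∈ H := Subgroup.mem_centralizer_singleton_iff.mpr ha.symm
        have : ((a : G ⧸ H) ∈ MulAction.fixedBy (G ⧸ H) h) := by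
          simp only [MulAction.mem_fixedBy]
          show ((h * a : G) : G ⧸ H) = (a : G ⧸ H)
          rw [QuotientGroup.eq]
          have := H.inv_mem hmem
          simpa [mul_assoc, mul_inv_rev] using this
        exact Fintype.card_pos_iff.mpr ⟨⟨_, this⟩⟩
      -- The identity has at least 2 fixed points
      have hone : 2 ≤ Fintype.card (MulAction.fixedBy (G ⧸ H) (1 : G)) := by
        have : ∀ q : G ⧸ H, q ∈ MulAction.fixedBy (G ⧸ H) (1 : G) := by
          intro q; simp [MulAction.mem_fixedBy]
        have e : Fintype.card (MulAction.fixedBy (G ⧸ H) (1 : G)) = Fintype.card (G ⧸ H) := by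
          apply Fintype.card_of_finset'
          intro q; simp
        rw [e]
        have : Nontrivial (G ⧸ H) := ⟨_, _, hq⟩
        exact Fintype.one_lt_card
      -- Burnside
      have hburn := MulAction.sum_card_fixedBy_eq_card_orbits_mul_card_group G (G ⧸ H)
      have horb : Fintype.card (MulAction.orbitRel.Quotient G (G ⧸ H)) = 1 := by
        have : Subsingleton (MulAction.orbitRel.Quotient G (G ⧸ H)) :=
          (MulAction.pretransitive_iff_subsingleton_quotient G (G ⧸ H)).mp inferInstance
        have : Nonempty (MulAction.orbitRel.Quotient G (G ⧸ H)) :=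
          ⟨Quotient.mk _ ((1 : G) : G ⧸ H)⟩
        obtain ⟨q⟩ := ‹Nonempty (MulAction.orbitRel.Quotient G (G ⧸ H))›
        exact Fintype.card_eq_one_iff.mpr ⟨q, fun y => Subsingleton.elim y q⟩
      rw [horb, one_mul] at hburn
      have hlt : Fintype.card G < ∑ a : G, Fintype.card (MulAction.fixedBy (G ⧸ H) a) := by
        calc Fintype.card G = ∑ _a : G, 1 := by simp
        _ < ∑ a : G, Fintype.card (MulAction.fixedBy (G ⧸ H) a) :=
          Finset.sum_lt_sum (fun i _ => hfix i) ⟨1, Finset.mem_univ _, by omega⟩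
      omega
    rw [Subgroup.mem_center_iff]
    intro h
    have : h ∈ H := hHtop ▸ Subgroup.mem_top h
    exact Subgroup.mem_centralizer_singleton_iff.mp this
  · intro hg h
    exact ⟨1, by simpa using (show Commute g h from (Subgroup.mem_center_iff.mp hg h).symm)⟩
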